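/- arXiv:2409.19285 — 6 statements merged into one kernel-verified Lean document; each statement's English description precedes it below -/
import Mathlib

section
/- The function b'(x) = (1-4x) * sqrt(1-x) / (2 * sqrt(x)) is strictly convex on (0,1). -/
open Real Set

private noncomputable def f0 : ℝ → ℝ := fun x => (1 - 4 * x) * Real.sqrt (1 - x) / (2 * Real.sqrt x)
private noncomputable def f1 : ℝ → ℝ := fun x => (2 * x ^ 2 - x - 1/4) / (Real.sqrt x ^ 3 * Real.sqrt (1 - x))
private noncomputable def f2 : ℝ → ℝ := fun x => 3 / (8 * Real.sqrt x ^ 5 * Real.sqrt (1 - x) ^ 3)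

private lemma hd1 {x : ℝ} (hx : x ∈ Set.Ioo (0:ℝ) 1) : HasDerivAt f0 (f1 x) x := by
  obtain ⟨hx0, hx1⟩ := hx
  have h1x : (0:ℝ) < 1 - x := by linarith
  have ha0 : 0 < Real.sqrt x := Real.sqrt_pos.mpr hx0
  have hb0 : 0 < Real.sqrt (1 - x) := Real.sqrt_pos.mpr h1x
  have hb : HasDerivAt (fun y : ℝ => Real.sqrt (1 - y)) (1 / (2 * Real.sqrt (1 - x)) * (-1)) x := by
    have := (Real.hasDerivAt_sqrt (ne_of_gt h1x)).comp x
      ((hasDerivAt_const x (1:ℝ)).sub (hasDerivAt_id x))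
    simpa [Function.comp_def] using this
  have hN : HasDerivAt (fun y : ℝ => (1 - 4 * y) * Real.sqrt (1 - y))
      ((-4) * Real.sqrt (1 - x) + (1 - 4 * x) * (1 / (2 * Real.sqrt (1 - x)) * (-1))) x := by
    have h4 : HasDerivAt (fun y : ℝ => 1 - 4 * y) (-4) x := by
      simpa [Pi.sub_def] using ((hasDerivAt_const x (1:ℝ)).sub ((hasDerivAt_id x).const_mul 4))
    exact h4.mul hb
  have hD : HasDerivAt (fun y : ℝ => 2 * Real.sqrt y) (2 * (1 / (2 * Real.sqrt x))) x :=
    (Real.hasDerivAt_sqrt (ne_of_gt hx0)).const_mul 2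
  have hDiv := hN.div hD (by positivity)
  convert hDiv using 1
  · rfl
  · rfl
  · rfl
  have ha : Real.sqrt x ^ 2 = x := Real.sq_sqrt hx0.le
  have hbb : Real.sqrt (1 - x) ^ 2 = 1 - x := Real.sq_sqrt h1x.le
  simp only [f1]
  field_simp
  linear_combination ((4) * Real.sqrt x^0 * Real.sqrt (1-x)^0 * x^0 + (-16) * Real.sqrt x^0 * Real.sqrt (1-x)^0 * x^1 + (32) * Real.sqrt x^0 * Real.sqrt (1-x)^2 * x^0 + (16) * Real.sqrt x^1 * Real.sqrt (1-x)^1 * x^0 + (48) * Real.sqrt x^1 * Real.sqrt (1-x)^1 * x^1 + (-64) * Real.sqrt x^1 * Real.sqrt (1-x)^1 * x^2 + (-16) * Real.sqrt x^1 * Real.sqrt (1-x)^3 * x^0 + (-64) * Real.sqrt x^1 * Real.sqrt (1-x)^3 * x^1 + (-16) * Real.sqrt x^3 * Real.sqrt (1-x)^1 * x^0 + (64) * Real.sqrt x^3 * Real.sqrt (1-x)^1 * x^1 + (-128) * Real.sqrt x^3 * Real.sqrt (1-x)^3 * x^0) * ha + ((4) * Real.sqrt x^0 * Real.sqrt (1-x)^0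 * x^0 + (16) * Real.sqrt x^0 * Real.sqrt (1-x)^0 * x^1 + (-16) * Real.sqrt x^1 * Real.sqrt (1-x)^1 * x^1 + (-64) * Real.sqrt x^1 * Real.sqrt (1-x)^1 * x^2) * hbb + ((-16) * Real.sqrt x^1 * Real.sqrt (1-x)^1 + (16) * Real.sqrt x^1 * Real.sqrt (1-x)^3 + (16) * Real.sqrt x^3 * Real.sqrt (1-x)^1 + (128) * Real.sqrt x^3 * Real.sqrt (1-x)^3 + (-48) * x^1 * Real.sqrt x^1 * Real.sqrt (1-x)^1 + (64) * x^1 * Real.sqrt x^1 * Real.sqrt (1-x)^3 + (-64) * x^1 * Real.sqrt x^3 * Real.sqrt (1-x)^1 + (64) * x^2 * Real.sqrt x^1 * Real.sqrt (1-x)^1) * ha + ((16) * x^1 * Real.sqrt x^1 * Real.sqrt (1-x)^1 + (64) * x^2 * Real.sqrt x^1 * Real.sqrt (1-x)^1) * hbb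

private lemma hd2 {x : ℝ} (hx : x ∈ Set.Ioo (0:ℝ) 1) : HasDerivAt f1 (f2 x) x := by
  obtain ⟨hx0, hx1⟩ := hx
  have h1x : (0:ℝ) < 1 - x := by linarith
  have ha0 : 0 < Real.sqrt x := Real.sqrt_pos.mpr hx0
  have hb0 : 0 < Real.sqrt (1 - x) := Real.sqrt_pos.mpr h1x
  have hsb : HasDerivAt (fun y : ℝ => Real.sqrt (1 - y)) (1 / (2 * Real.sqrt (1 - x)) * (-1)) x := by
    have := (Real.hasDerivAt_sqrt (ne_of_gt h1x)).comp x
      ((hasDerivAt_const x (1:ℝ)).sub (hasDerivAt_id x))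
    simpa [Function.comp_def] using this
  have hsa : HasDerivAt (fun y : ℝ => Real.sqrt y ^ 3)
      (3 * Real.sqrt x ^ 2 * (1 / (2 * Real.sqrt x))) x := by
    have := (Real.hasDerivAt_sqrt (ne_of_gt hx0)).pow 3
    simpa [Pi.pow_def, mul_comm, mul_assoc, mul_left_comm] using this
  have hN : HasDerivAt (fun y : ℝ => 2 * y ^ 2 - y - 1/4) (2 * (2 * x) - 1) x := by
    have : HasDerivAt (fun y : ℝ => 2 * y ^ 2 - y - 1/4) (2 * (2 * x ^ 1) - 1 - 0) x :=
      (((hasDerivAt_pow 2 x).const_mul 2).sub (hasDerivAt_id x)).sub (hasDerivAt_const x (1/4))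
    simpa using this
  have hD : HasDerivAt (fun y : ℝ => Real.sqrt y ^ 3 * Real.sqrt (1 - y))
      (3 * Real.sqrt x ^ 2 * (1 / (2 * Real.sqrt x)) * Real.sqrt (1 - x)
       + Real.sqrt x ^ 3 * (1 / (2 * Real.sqrt (1 - x)) * (-1))) x := hsa.mul hsb
  have hDiv := hN.div hD (by positivity)
  convert hDiv using 1
  · rfl
  · rfl
  · rfl
  have ha : Real.sqrt x ^ 2 = x := Real.sq_sqrt hx0.le
  have hbb : Real.sqrt (1 - x) ^ 2 = 1 - x := Real.sq_sqrt h1x.le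
  simp only [f2]
  field_simp
  linear_combination ((8) * Real.sqrt x^0 * Real.sqrt (1-x)^0 * x^0 + (32) * Real.sqrt x^0 * Real.sqrt (1-x)^0 * x^1 + (-64) * Real.sqrt x^0 * Real.sqrt (1-x)^0 * x^2 + (64) * Real.sqrt x^0 * Real.sqrt (1-x)^2 * x^0 + (-256) * Real.sqrt x^0 * Real.sqrt (1-x)^2 * x^1 + (-48) * Real.sqrt x^1 * Real.sqrt (1-x)^3 * x^2 + (-16) * Real.sqrt x^1 * Real.sqrt (1-x)^3 * x^3 + (-64) * Real.sqrt x^1 * Real.sqrt (1-x)^3 * x^4 + (128) * Real.sqrt x^1 * Real.sqrt (1-x)^3 * x^5 + (48) * Real.sqrt x^1 * Real.sqrt (1-x)^5 * x^2 + (64) * Real.sqrt x^1 * Real.sqrt (1-x)^5 * x^3 + (128) * Real.sqrt x^1 * Real.sqrt (1-x)^5 * x^4 + (-48) * Real.sqrt x^3 * Real.sqrt (1-x)^3 * x^1 + (-16) * Real.sqrt x^3 * Real.sqrt (1-x)^3 * x^2 + (-64) * Real.sqrt x^3 * Real.sqrt (1-x)^3 * x^3 + (128) * Real.sqrt x^3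 * Real.sqrt (1-x)^3 * x^4 + (48) * Real.sqrt x^3 * Real.sqrt (1-x)^5 * x^1 + (64) * Real.sqrt x^3 * Real.sqrt (1-x)^5 * x^2 + (128) * Real.sqrt x^3 * Real.sqrt (1-x)^5 * x^3 + (-48) * Real.sqrt x^5 * Real.sqrt (1-x)^3 * x^0 + (-16) * Real.sqrt x^5 * Real.sqrt (1-x)^3 * x^1 + (-64) * Real.sqrt x^5 * Real.sqrt (1-x)^3 * x^2 + (128) * Real.sqrt x^5 * Real.sqrt (1-x)^3 * x^3 + (-128) * Real.sqrt x^5 * Real.sqrt (1-x)^5 * x^1 + (512) * Real.sqrt x^5 * Real.sqrt (1-x)^5 * x^2 + (-16) * Real.sqrt x^7 * Real.sqrt (1-x)^3 * x^0 + (-64) * Real.sqrt x^7 * Real.sqrt (1-x)^3 * x^1 + (128) * Real.sqrt x^7 * Real.sqrt (1-x)^3 * x^2 + (-128) * Real.sqrt x^7 * Real.sqrt (1-x)^5 * x^0 + (512) * Real.sqrt x^7 * Real.sqrt (1-x)^5 * x^1) * ha + ((-24) * Real.sqrt x^0 * Real.sqrt (1-x)^0 * x^0 + (-32) * Real.sqrt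 x^0 * Real.sqrt (1-x)^0 * x^1 + (-64) * Real.sqrt x^0 * Real.sqrt (1-x)^0 * x^2 + (48) * Real.sqrt x^1 * Real.sqrt (1-x)^3 * x^3 + (64) * Real.sqrt x^1 * Real.sqrt (1-x)^3 * x^4 + (128) * Real.sqrt x^1 * Real.sqrt (1-x)^3 * x^5) * hbb + ((48) * Real.sqrt x^5 * Real.sqrt (1-x)^3 + (16) * Real.sqrt x^7 * Real.sqrt (1-x)^3 + (128) * Real.sqrt x^7 * Real.sqrt (1-x)^5 + (48) * x^1 * Real.sqrt x^3 * Real.sqrt (1-x)^3 + (-48) * x^1 * Real.sqrt x^3 * Real.sqrt (1-x)^5 + (16) * x^1 * Real.sqrt x^5 * Real.sqrt (1-x)^3 + (128) * x^1 * Real.sqrt x^5 * Real.sqrt (1-x)^5 + (64) * x^1 * Real.sqrt x^7 * Real.sqrt (1-x)^3 + (-512) * x^1 * Real.sqrt x^7 * Real.sqrt (1-x)^5 + (48) * x^2 * Real.sqrt x^1 * Real.sqrt (1-x)^3 + (-48) * x^2 * Real.sqrt x^1 * Real.sqrt (1-x)^5 + (16) * x^2 * Real.sqrt x^3 * Real.sqrt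 (1-x)^3 + (-64) * x^2 * Real.sqrt x^3 * Real.sqrt (1-x)^5 + (64) * x^2 * Real.sqrt x^5 * Real.sqrt (1-x)^3 + (-512) * x^2 * Real.sqrt x^5 * Real.sqrt (1-x)^5 + (-128) * x^2 * Real.sqrt x^7 * Real.sqrt (1-x)^3 + (16) * x^3 * Real.sqrt x^1 * Real.sqrt (1-x)^3 + (-64) * x^3 * Real.sqrt x^1 * Real.sqrt (1-x)^5 + (64) * x^3 * Real.sqrt x^3 * Real.sqrt (1-x)^3 + (-128) * x^3 * Real.sqrt x^3 * Real.sqrt (1-x)^5 + (-128) * x^3 * Real.sqrt x^5 * Real.sqrt (1-x)^3 + (64) * x^4 * Real.sqrt x^1 * Real.sqrt (1-x)^3 + (-128) * x^4 * Real.sqrt x^1 * Real.sqrt (1-x)^5 + (-128) * x^4 * Real.sqrt x^3 * Real.sqrt (1-x)^3 + (-128) * x^5 * Real.sqrt x^1 * Real.sqrt (1-x)^3) * ha + ((-48) * x^3 * Real.sqrt x^1 * Real.sqrt (1-x)^3 + (-64) * x^4 * Real.sqrt x^1 * Real.sqrt (1-x)^3 + (-128) * x^5 * Real.sqrt x^1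 * Real.sqrt (1-x)^3) * hbb

theorem stmt_2 :
    StrictConvexOn ℝ (Set.Ioo (0 : ℝ) 1)
      (fun x => (1 - 4 * x) * Real.sqrt (1 - x) / (2 * Real.sqrt x)) := by
  have hopen : IsOpen (Set.Ioo (0:ℝ) 1) := isOpen_Ioo
  have key : StrictConvexOn ℝ (Set.Ioo (0:ℝ) 1) f0 := by
    apply strictConvexOn_of_deriv2_pos (convex_Ioo 0 1)
    · exact fun x hx => (hd1 hx).continuousAt.continuousWithinAt
    · intro x hx
      rw [interior_Ioo] at hx
      have hderiv : deriv f0 =ᶠ[nhds x] f1 := by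
        filter_upwards [hopen.mem_nhds hx] with y hy
        exact (hd1 hy).deriv
      have : deriv (deriv f0) x = f2 x := by
        rw [Filter.EventuallyEq.deriv_eq hderiv]
        exact (hd2 hx).deriv
      simp only [Function.iterate_succ, Function.iterate_zero, Function.comp_apply, id]
      rw [this]
      obtain ⟨hx0, hx1⟩ := hx
      have : (0:ℝ) < 1 - x := by linarith
      simp only [f2]
      positivity
  exact key
end

section
/- For real parameters a1, a2 with a2 + a1 > 0, the equation a2*x + a1 = b'(x), where b'(x) = (1-4x)*sqrt(1-x)/(2*sqrt(x)), has exactly one solution x in (0,1). -/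
open Real Set

noncomputable def phi (x : ℝ) : ℝ := (1 - 4 * x) * Real.sqrt (1 - x) / (2 * Real.sqrt x)

noncomputable def psi (x : ℝ) : ℝ :=
  (8 * x ^ 2 - 4 * x - 1) / (4 * (x * Real.sqrt x) * Real.sqrt (1 - x))

lemma hasDerivAt_phi {x : ℝ} (hx : x ∈ Set.Ioo (0:ℝ) 1) : HasDerivAt phi (psi x) x := by
  obtain ⟨hx0, hx1⟩ := hx
  have hs : 0 < Real.sqrt x := Real.sqrt_pos.2 hx0
  have ht : 0 < Real.sqrt (1 - x) := Real.sqrt_pos.2 (by linarith)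
  have hs2 : Real.sqrt x ^ 2 = x := Real.sq_sqrt hx0.le
  have ht2 : Real.sqrt (1 - x) ^ 2 = 1 - x := Real.sq_sqrt (by linarith)
  have hsq : HasDerivAt Real.sqrt (1 / (2 * Real.sqrt x)) x := Real.hasDerivAt_sqrt hx0.ne'
  have h1x : HasDerivAt (fun y : ℝ => 1 - y) (-1) x := by
    exact (hasDerivAt_id x).const_sub 1
  have hsqt : HasDerivAt (fun y : ℝ => Real.sqrt (1 - y))
      (1 / (2 * Real.sqrt (1 - x)) * (-1)) x :=
    (Real.hasDerivAt_sqrt (by intro hc; nlinarith [hc] : (1:ℝ) - x ≠ 0)).comp x h1x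
  have hN : HasDerivAt (fun y : ℝ => (1 - 4 * y) * Real.sqrt (1 - y))
      ((-4) * Real.sqrt (1 - x) + (1 - 4 * x) * (1 / (2 * Real.sqrt (1 - x)) * (-1))) x := by
    have h4 : HasDerivAt (fun y : ℝ => 1 - 4 * y) (-4) x := by
      simpa using ((hasDerivAt_id x).const_mul (4:ℝ)).const_sub (1:ℝ)
    exact h4.mul hsqt
  have hD : HasDerivAt (fun y : ℝ => 2 * Real.sqrt y) (2 * (1 / (2 * Real.sqrt x))) x :=
    hsq.const_mul 2
  have hDne : 2 * Real.sqrt x ≠ 0 := by positivity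
  have : HasDerivAt phi _ x := hN.div hD hDne
  convert this using 1
  rw [psi]
  field_simp
  linear_combination ((-16:ℝ) * (Real.sqrt x * Real.sqrt (1-x)) -
      48 * Real.sqrt x * Real.sqrt (1-x) * x + 64 * Real.sqrt x * Real.sqrt (1-x) * x^2 +
      128 * Real.sqrt x * (Real.sqrt (1-x))^3 * x) * hs2 +
    (16 * Real.sqrt x * Real.sqrt (1-x) * x + 64 * Real.sqrt x * Real.sqrt (1-x) * x^2) * ht2 +
    ( (-12:ℝ) * Real.sqrt x^0 * Real.sqrt (1-x)^0 * x^1 + (32:ℝ) * Real.sqrt x^0 * Real.sqrt (1-x)^2 * x^1 + (48:ℝ) * Real.sqrt x^1 * Real.sqrt (1-x)^1 * x^1 + (-128:ℝ) * Real.sqrt x^1 * Real.sqrt (1-x)^3 * x^1 + (16:ℝ) * Real.sqrt x^0 * Real.sqrt (1-x)^0 * x^2 + (-64:ℝ) * Real.sqrt x^1 * Real.sqrt (1-x)^1 * x^2 + (-4:ℝ) * Real.sqrt x^0 * Real.sqrt (1-x)^0 * x^0 + (16:ℝ) * Real.sqrt x^1 * Real.sqrt (1-x)^1 * x^0 ) *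 hs2 +
    ( (-16:ℝ) * Real.sqrt x^1 * Real.sqrt (1-x)^1 * x^1 + (4:ℝ) * Real.sqrt x^0 * Real.sqrt (1-x)^0 * x^1 + (-64:ℝ) * Real.sqrt x^1 * Real.sqrt (1-x)^1 * x^2 + (16:ℝ) * Real.sqrt x^0 * Real.sqrt (1-x)^0 * x^2 ) * ht2

lemma hasDerivAt_psi {x : ℝ} (hx : x ∈ Set.Ioo (0:ℝ) 1) :
    HasDerivAt psi (3 / (8 * (x ^ 2 * Real.sqrt x) * ((1 - x) * Real.sqrt (1 - x)))) x := by
  obtain ⟨hx0, hx1⟩ := hx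
  have hs : 0 < Real.sqrt x := Real.sqrt_pos.2 hx0
  have ht : 0 < Real.sqrt (1 - x) := Real.sqrt_pos.2 (by linarith)
  have hs2 : Real.sqrt x ^ 2 = x := Real.sq_sqrt hx0.le
  have ht2 : Real.sqrt (1 - x) ^ 2 = 1 - x := Real.sq_sqrt (by linarith)
  have hsq : HasDerivAt Real.sqrt (1 / (2 * Real.sqrt x)) x := Real.hasDerivAt_sqrt hx0.ne'
  have h1x : HasDerivAt (fun y : ℝ => 1 - y) (-1) x := by
    exact (hasDerivAt_id x).const_sub 1
  have hsqt : HasDerivAt (fun y : ℝ => Real.sqrt (1 - y))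
      (1 / (2 * Real.sqrt (1 - x)) * (-1)) x :=
    (Real.hasDerivAt_sqrt (by intro hc; nlinarith [hc] : (1:ℝ) - x ≠ 0)).comp x h1x
  have hA : HasDerivAt (fun y : ℝ => 8 * y ^ 2 - 4 * y - 1) (16 * x - 4) x := by
    have h : HasDerivAt (fun y : ℝ => 8 * y ^ 2 - 4 * y - 1) _ x := (((hasDerivAt_pow 2 x).const_mul 8).sub ((hasDerivAt_id x).const_mul 4)).sub_const (1:ℝ)
    convert h using 1
    push_cast; ring
  have hB1 : HasDerivAt (fun y : ℝ => 4 * (y * Real.sqrt y))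
      (4 * (1 * Real.sqrt x + x * (1 / (2 * Real.sqrt x)))) x :=
    ((hasDerivAt_id x).mul hsq).const_mul 4
  have hB : HasDerivAt (fun y : ℝ => 4 * (y * Real.sqrt y) * Real.sqrt (1 - y))
      (4 * (1 * Real.sqrt x + x * (1 / (2 * Real.sqrt x))) * Real.sqrt (1 - x) +
        4 * (x * Real.sqrt x) * (1 / (2 * Real.sqrt (1 - x)) * (-1))) x := hB1.mul hsqt
  have hBne : 4 * (x * Real.sqrt x) * Real.sqrt (1 - x) ≠ 0 := by positivity
  have : HasDerivAt psi _ x := hA.div hB hBne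
  convert this using 1
  have h1xne : (1:ℝ) - x ≠ 0 := by intro hc; nlinarith [hc]
  field_simp [hx0.ne', h1xne]
  linear_combination
    ((64:ℝ) * Real.sqrt x^1 * Real.sqrt (1-x)^1 * x^3 + (192:ℝ) * Real.sqrt x^1 * Real.sqrt (1-x)^1 * x^4 + (-768:ℝ) * Real.sqrt x^1 * Real.sqrt (1-x)^1 * x^5 + (512:ℝ) * Real.sqrt x^1 * Real.sqrt (1-x)^1 * x^6 + (64:ℝ) * Real.sqrt x^1 * Real.sqrt (1-x)^3 * x^2 + (128:ℝ) * Real.sqrt x^1 * Real.sqrt (1-x)^3 * x^3 + (-1024:ℝ) * Real.sqrt x^1 * Real.sqrt (1-x)^3 * x^4 + (1024:ℝ) * Real.sqrt x^1 * Real.sqrt (1-x)^3 * x^5) * hs2 +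
    ((-64:ℝ) * Real.sqrt x^1 * Real.sqrt (1-x)^1 * x^4 + (-256:ℝ) * Real.sqrt x^1 * Real.sqrt (1-x)^1 * x^5 + (512:ℝ) * Real.sqrt x^1 * Real.sqrt (1-x)^1 * x^6) * ht2 +
    ( (8:ℝ) * Real.sqrt x^0 * Real.sqrt (1-x)^2 * x^0 + (16:ℝ) * Real.sqrt x^0 * Real.sqrt (1-x)^2 * x^1 + (-128:ℝ) * Real.sqrt x^0 * Real.sqrt (1-x)^2 * x^2 + (128:ℝ) * Real.sqrt x^0 * Real.sqrt (1-x)^2 * x^3 + (8:ℝ) * Real.sqrt x^0 * Real.sqrt (1-x)^0 * x^1 + (24:ℝ) * Real.sqrt x^0 * Real.sqrt (1-x)^0 * x^2 + (-96:ℝ) * Real.sqrt x^0 * Real.sqrt (1-x)^0 * x^3 + (64:ℝ) * Real.sqrt x^0 * Real.sqrt (1-x)^0 * x^4 + (-64:ℝ) * Real.sqrt x^1 * Real.sqrt (1-x)^1 * x^3 + (-192:ℝ) * Real.sqrt x^1 * Real.sqrt (1-x)^1 * x^4 + (768:ℝ) * Real.sqrt x^1 * Real.sqrt (1-x)^1 *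 x^5 + (-512:ℝ) * Real.sqrt x^1 * Real.sqrt (1-x)^1 * x^6 + (-64:ℝ) * Real.sqrt x^1 * Real.sqrt (1-x)^3 * x^2 + (-128:ℝ) * Real.sqrt x^1 * Real.sqrt (1-x)^3 * x^3 + (1024:ℝ) * Real.sqrt x^1 * Real.sqrt (1-x)^3 * x^4 + (-1024:ℝ) * Real.sqrt x^1 * Real.sqrt (1-x)^3 * x^5 ) * hs2 +
    ( (64:ℝ) * Real.sqrt x^1 * Real.sqrt (1-x)^1 * x^4 + (256:ℝ) * Real.sqrt x^1 * Real.sqrt (1-x)^1 * x^5 + (-512:ℝ) * Real.sqrt x^1 * Real.sqrt (1-x)^1 * x^6 + (-8:ℝ) * Real.sqrt x^0 * Real.sqrt (1-x)^0 * x^2 + (-32:ℝ) * Real.sqrt x^0 * Real.sqrt (1-x)^0 * x^3 + (64:ℝ) * Real.sqrt x^0 * Real.sqrt (1-x)^0 * x^4 ) * ht2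

lemma phi_contOn : ContinuousOn phi (Set.Ioc (0:ℝ) 1) := by
  apply ContinuousOn.div
  · exact (((continuous_const.sub (continuous_const.mul continuous_id)).mul
      (Real.continuous_sqrt.comp (continuous_const.sub continuous_id)))).continuousOn
  · exact (continuous_const.mul Real.continuous_sqrt).continuousOn
  · intro x hx
    have : 0 < Real.sqrt x := Real.sqrt_pos.2 hx.1
    positivity

lemma phi_strictConvex : StrictConvexOn ℝ (Set.Ioc (0:ℝ) 1) phi := by
  apply strictConvexOn_of_deriv2_pos (convex_Ioc 0 1) phi_contOn
  intro x hx
  rw [interior_Ioc] at hx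
  have heq : deriv phi =ᶠ[nhds x] psi := by
    filter_upwards [isOpen_Ioo.mem_nhds hx] with y hy
    exact (hasDerivAt_phi hy).deriv
  have h2 : (deriv^[2] phi) x = deriv (deriv phi) x := rfl
  rw [h2, heq.deriv_eq, (hasDerivAt_psi hx).deriv]
  obtain ⟨hx0, hx1⟩ := hx
  have hs : 0 < Real.sqrt x := Real.sqrt_pos.2 hx0
  have ht : 0 < Real.sqrt (1 - x) := Real.sqrt_pos.2 (by linarith)
  have h1x : (0:ℝ) < 1 - x := by linarith
  positivity

theorem stmt_3 (a1 a2 : ℝ) (h : a2 + a1 > 0) :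
    ∃! x : ℝ, x ∈ Set.Ioo (0 : ℝ) 1 ∧
      a2 * x + a1 = (1 - 4 * x) * Real.sqrt (1 - x) / (2 * Real.sqrt x) := by
  have hphi1 : phi 1 = 0 := by simp [phi]
  -- uniqueness helper: no two distinct solutions
  have uniq : ∀ x y : ℝ, x ∈ Set.Ioo (0:ℝ) 1 → y ∈ Set.Ioo (0:ℝ) 1 → x < y →
      a2 * x + a1 = phi x → a2 * y + a1 = phi y → False := by
    intro x y hx hy hxy hfx hfy
    set t : ℝ := (y - x) / (1 - x) with ht
    have hx1 : x < 1 := hx.2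
    have ht0 : 0 < t := by
      apply div_pos <;> linarith
    have ht1 : t < 1 := by
      rw [ht, div_lt_one (by linarith)]
      linarith [hy.2]
    have htmul : t * (1 - x) = y - x := div_mul_cancel₀ _ (by linarith)
    have hcomb : (1 - t) * x + t * 1 = y := by nlinarith [htmul]
    have hconv := phi_strictConvex.2 (Set.mem_Ioc.2 ⟨hx.1, hx.2.le⟩)
      (Set.mem_Ioc.2 ⟨one_pos, le_refl 1⟩) (by linarith : x ≠ 1)
      (by linarith : (0:ℝ) < 1 - t) ht0 (by ring)
    simp only [smul_eq_mul] at hconv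
    rw [hcomb, hphi1] at hconv
    -- hconv : phi y < (1-t) * phi x + t * 0
    have hline : a2 * y + a1 = (1 - t) * (a2 * x + a1) + t * (a2 + a1) := by
      rw [← hcomb]; ring
    rw [hfy, hfx] at hline
    nlinarith
  -- existence
  set M : ℝ := |a2| + |a1| with hM
  have hM0 : 0 ≤ M := by positivity
  set x0 : ℝ := min (1/8) (1 / (64 * (M + 1) ^ 2)) with hx0def
  have hx0pos : 0 < x0 := by
    apply lt_min (by norm_num)
    positivity
  have hx08 : x0 ≤ 1/8 := min_le_left _ _
  have hx0lt1 : x0 < 1 := by linarith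
  have hphix0 : M + 1 ≤ phi x0 := by
    have hs : 0 < Real.sqrt x0 := Real.sqrt_pos.2 hx0pos
    have hsx : Real.sqrt x0 ≤ 1 / (8 * (M + 1)) := by
      rw [show (1:ℝ) / (8 * (M+1)) = Real.sqrt ((1 / (8 * (M+1)))^2) by
        rw [Real.sqrt_sq (by positivity)]]
      apply Real.sqrt_le_sqrt
      calc x0 ≤ 1 / (64 * (M + 1) ^ 2) := min_le_right _ _
        _ = (1 / (8 * (M+1)))^2 := by field_simp; ring
    have h1 : (1:ℝ)/2 ≤ 1 - 4 * x0 := by linarith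
    have h2 : (1:ℝ)/2 ≤ Real.sqrt (1 - x0) := by
      rw [show (1:ℝ)/2 = Real.sqrt (1/4) by
        rw [show (1:ℝ)/4 = (1/2)^2 by norm_num, Real.sqrt_sq (by norm_num)]]
      apply Real.sqrt_le_sqrt; linarith
    have hnum : (1:ℝ)/4 ≤ (1 - 4 * x0) * Real.sqrt (1 - x0) := by nlinarith
    have : (1:ℝ)/4 / (2 * Real.sqrt x0) ≤ phi x0 := by
      apply div_le_div_of_nonneg_right ?_ ?_ |>.trans_eq rfl
      · exact hnum
      · positivity
    refine le_trans ?_ this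
    rw [le_div_iff₀ (by positivity)]
    have hMinv : (M + 1) * (1 / (8 * (M + 1))) = 1/8 := by field_simp
    nlinarith [hsx, hM0, hs.le]
  -- IVT
  set g : ℝ → ℝ := fun y => a2 * y + a1 - phi y with hg
  have hgc : ContinuousOn g (Set.Icc x0 1) := by
    apply ContinuousOn.sub
    · exact ((continuous_const.mul continuous_id).add continuous_const).continuousOn
    · exact phi_contOn.mono (fun y hy => ⟨lt_of_lt_of_le hx0pos hy.1, hy.2⟩)
  have hgx0 : g x0 < 0 := by
    have hline : a2 * x0 + a1 ≤ M := by
      have h1 : a2 * x0 ≤ |a2| := by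
        calc a2 * x0 ≤ |a2 * x0| := le_abs_self _
          _ = |a2| * |x0| := abs_mul _ _
          _ ≤ |a2| * 1 := by
              apply mul_le_mul_of_nonneg_left _ (abs_nonneg _)
              rw [abs_of_pos hx0pos]; linarith
          _ = |a2| := mul_one _
      have h2 : a1 ≤ |a1| := le_abs_self _
      simp only [hM]; linarith
    simp only [hg]
    linarith
  have hg1 : 0 < g 1 := by simp only [hg, hphi1]; linarith
  have hmem : (0:ℝ) ∈ Set.Ioo (g x0) (g 1) := ⟨hgx0, hg1⟩
  obtain ⟨c, hc, hgc0⟩ := intermediate_value_Ioo hx0lt1.le hgc hmem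
  have hcmem : c ∈ Set.Ioo (0:ℝ) 1 := ⟨lt_trans hx0pos hc.1, hc.2⟩
  have hceq : a2 * c + a1 = phi c := by
    simp only [hg] at hgc0; linarith
  refine ⟨c, ⟨hcmem, hceq⟩, ?_⟩
  rintro y ⟨hymem, hyeq⟩
  have hyeq' : a2 * y + a1 = phi y := hyeq
  rcases lt_trichotomy y c with hlt | heq | hgt
  · exact absurd (uniq y c hymem hcmem hlt hyeq' hceq) (not_false)
  · exact heq
  · exact absurd (uniq c y hcmem hymem hgt hceq hyeq') (not_false)
end

section
/- For a1 ∈ ℝ, the unique line through (0, a1) tangent to the graph of b'(x) = (1-4x)*sqrt(1-x)/(2*sqrt(x)) at a point x0 ∈ (0,1) has slope h(a1) = (1/27) * (4*a1^2 - 4*a1*sqrt(4*a1^2+9) - 9) * (2*a1 + sqrt(4*a1^2+9)), and the tangency point is x0 = 1/2 - a1/sqrt(9 + 4*a1^2). -/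
set_option maxHeartbeats 2000000 in
theorem stmt_5 (a1 : ℝ) (b' b'' : ℝ → ℝ)
    (hb' : ∀ x, b' x = (1 - 4 * x) * Real.sqrt (1 - x) / (2 * Real.sqrt x))
    (hb'' : ∀ x, b'' x =
      (8 * x ^ 2 - 4 * x - 1) / (4 * x ^ ((3 : ℝ) / 2) * Real.sqrt (1 - x))) :
    (∃! x0 : ℝ, x0 ∈ Set.Ioo (0 : ℝ) 1 ∧ b' x0 - b'' x0 * x0 = a1) ∧
    (∀ x0 ∈ Set.Ioo (0 : ℝ) 1, b' x0 - b'' x0 * x0 = a1 →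
      x0 = 1 / 2 - a1 / Real.sqrt (9 + 4 * a1 ^ 2) ∧
      b'' x0 = (1 / 27) * (4 * a1 ^ 2 - 4 * a1 * Real.sqrt (4 * a1 ^ 2 + 9) - 9) *
        (2 * a1 + Real.sqrt (4 * a1 ^ 2 + 9))) := by
  set r := Real.sqrt (9 + 4 * a1 ^ 2) with hrdef
  have hr2 : r ^ 2 = 9 + 4 * a1 ^ 2 := Real.sq_sqrt (by positivity)
  have hrpos : 0 < r := Real.sqrt_pos.mpr (by positivity)
  have hrr : Real.sqrt (4 * a1 ^ 2 + 9) = r := by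
    rw [hrdef, show (4 * a1 ^ 2 + 9 : ℝ) = 9 + 4 * a1 ^ 2 by ring]
  have habs : 2 * |a1| < r := by nlinarith [sq_abs a1, abs_nonneg a1]
  have hA : 0 < r - 2 * a1 := by
    have := le_abs_self a1; linarith
  have hB : 0 < r + 2 * a1 := by
    have := neg_abs_le a1; linarith
  set x0 := 1 / 2 - a1 / r with hx0def
  have hx0mem : x0 ∈ Set.Ioo (0 : ℝ) 1 := by
    constructor
    · rw [hx0def]
      have : a1 / r < 1 / 2 := by rw [div_lt_iff₀ hrpos]; linarith
      linarith
    · rw [hx0def]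
      have : -(1 / 2) < a1 / r := by rw [lt_div_iff₀ hrpos]; linarith
      linarith
  -- key simplification
  have hkey : ∀ x ∈ Set.Ioo (0 : ℝ) 1, b' x - b'' x * x =
      3 * (1 - 2 * x) / (4 * (Real.sqrt x * Real.sqrt (1 - x))) := by
    intro x hx
    obtain ⟨hx0, hx1⟩ := hx
    have hs : Real.sqrt x ^ 2 = x := Real.sq_sqrt hx0.le
    have ht : Real.sqrt (1 - x) ^ 2 = 1 - x := Real.sq_sqrt (by linarith)
    have hsp : 0 < Real.sqrt x := Real.sqrt_pos.mpr hx0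
    have htp : 0 < Real.sqrt (1 - x) := Real.sqrt_pos.mpr (by linarith)
    have h32 : x ^ ((3 : ℝ) / 2) = x * Real.sqrt x := by
      rw [show ((3 : ℝ) / 2) = 1 + (1 / 2 : ℝ) by norm_num, Real.rpow_add hx0,
        Real.rpow_one, ← Real.sqrt_eq_rpow]
    rw [hb' x, hb'' x, h32]
    set s := Real.sqrt x
    set t := Real.sqrt (1 - x)
    field_simp
    linear_combination (4 - 16 * x) * ht
  have hx0pos := hx0mem.1
  have hx01 := hx0mem.2
  set s0 := Real.sqrt x0 with hs0def
  set t0 := Real.sqrt (1 - x0) with ht0def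
  have hs0 : s0 ^ 2 = x0 := Real.sq_sqrt hx0pos.le
  have ht0 : t0 ^ 2 = 1 - x0 := Real.sq_sqrt (by linarith)
  have hs0p : 0 < s0 := Real.sqrt_pos.mpr hx0pos
  have ht0p : 0 < t0 := Real.sqrt_pos.mpr (by linarith)
  have hstsq : (s0 * t0) ^ 2 = (3 / (2 * r)) ^ 2 := by
    have hx0x : x0 * (1 - x0) = 9 / (4 * r ^ 2) := by
      rw [hx0def]; field_simp; linear_combination 4 * hr2
    calc (s0 * t0) ^ 2 = s0 ^ 2 * t0 ^ 2 := by ring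
      _ = x0 * (1 - x0) := by rw [hs0, ht0]
      _ = 9 / (4 * r ^ 2) := hx0x
      _ = (3 / (2 * r)) ^ 2 := by field_simp; ring
  have hst : s0 * t0 = 3 / (2 * r) := by
    have h2 : (s0 * t0 - 3 / (2 * r)) * (s0 * t0 + 3 / (2 * r)) = 0 := by
      linear_combination hstsq
    rcases mul_eq_zero.mp h2 with h | h
    · linarith
    · exfalso
      have h3 : 0 < s0 * t0 := mul_pos hs0p ht0p
      have h4 : 0 < 3 / (2 * r) := by positivity
      linarith
  -- x0 is a solution
  have hPx0 : b' x0 - b'' x0 * x0 = a1 := by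
    rw [hkey x0 hx0mem, hst, hx0def]
    field_simp
    ring
  -- uniqueness
  have huniq : ∀ x ∈ Set.Ioo (0 : ℝ) 1, b' x - b'' x * x = a1 → x = x0 := by
    intro x hx heq
    obtain ⟨hxp, hx1⟩ := hx
    rw [hkey x ⟨hxp, hx1⟩] at heq
    have hs : Real.sqrt x ^ 2 = x := Real.sq_sqrt hxp.le
    have ht : Real.sqrt (1 - x) ^ 2 = 1 - x := Real.sq_sqrt (by linarith)
    have hsp : 0 < Real.sqrt x := Real.sqrt_pos.mpr hxp
    have htp : 0 < Real.sqrt (1 - x) := Real.sqrt_pos.mpr (by linarith)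
    set s := Real.sqrt x
    set t := Real.sqrt (1 - x)
    rw [div_eq_iff (by positivity)] at heq
    -- heq : 3 * (1 - 2 * x) = a1 * (4 * (s * t))
    have hsq : 9 * (1 - 2 * x) ^ 2 = 16 * a1 ^ 2 * (x * (1 - x)) := by
      have h5 : (3 * (1 - 2 * x)) ^ 2 = (a1 * (4 * (s * t))) ^ 2 := by rw [heq]
      linear_combination h5 + (16 * a1 ^ 2 * t ^ 2) * hs + (16 * a1 ^ 2 * x) * ht
    have hquad : (r * x - (r / 2 - a1)) * (r * x - (r / 2 + a1)) = 0 := by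
      linear_combination (1 / 4) * hsq + (x ^ 2 - x + 1 / 4) * hr2
    rcases mul_eq_zero.mp hquad with h | h
    · rw [hx0def]
      have : r * x = r / 2 - a1 := by linarith
      field_simp
      linarith
    · -- x = 1/2 + a1/r ; sign forces a1 = 0
      have h6 : r * x = r / 2 + a1 := by linarith
      have hkey2 : 3 * (1 - 2 * x) * r = -6 * a1 := by linear_combination (-6) * h6
      have hm : -6 * a1 ^ 2 = 4 * a1 ^ 2 * (s * t * r) := by
        linear_combination (a1 * r) * heq + (-a1) * hkey2
      have hQ : 0 < s * t * r := by positivity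
      have h7 : a1 ^ 2 ≤ 0 := by nlinarith [mul_nonneg (sq_nonneg a1) hQ.le]
      have h8 : a1 = 0 := by
        have h9 : a1 ^ 2 = 0 := le_antisymm h7 (sq_nonneg a1)
        exact sq_eq_zero_iff.mp h9
      rw [hx0def, h8]
      rw [h8] at h6
      have hx12 : x = 1 / 2 := by
        have h10 : r * (x - 1 / 2) = 0 := by linear_combination h6
        rcases mul_eq_zero.mp h10 with h | h
        · exact absurd h (ne_of_gt hrpos)
        · linarith
      rw [hx12]; ring
  -- value of b'' at x0
  have h9 : (r - 2 * a1) * (r + 2 * a1) = 9 := by linear_combination hr2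
  have hb''x0 : b'' x0 = 1 / 27 * (4 * a1 ^ 2 - 4 * a1 * r - 9) * (2 * a1 + r) := by
    have h32 : x0 ^ ((3 : ℝ) / 2) = x0 * s0 := by
      rw [show ((3 : ℝ) / 2) = 1 + (1 / 2 : ℝ) by norm_num, Real.rpow_add hx0pos,
        Real.rpow_one, hs0def, ← Real.sqrt_eq_rpow]
    have hden : 4 * x0 ^ ((3 : ℝ) / 2) * t0 = 6 * x0 / r := by
      rw [h32, show 4 * (x0 * s0) * t0 = 4 * x0 * (s0 * t0) by ring, hst]
      field_simp; ring
    rw [hb'' x0, hden]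
    have hnum : 8 * x0 ^ 2 - 4 * x0 - 1 = (4 * a1 ^ 2 - 4 * a1 * r - 9) / r ^ 2 := by
      rw [hx0def]; field_simp; linear_combination (-4) * hr2
    have hx0r : x0 = (r - 2 * a1) / (2 * r) := by rw [hx0def]; field_simp
    rw [hnum, hx0r]
    rw [div_eq_iff (by positivity : (6 * ((r - 2 * a1) / (2 * r)) / r) ≠ 0)]
    field_simp
    linear_combination (24 * a1 * r + 54 - 24 * a1 ^ 2) * hr2
  constructor
  · exact ⟨x0, ⟨hx0mem, hPx0⟩, fun y hy => huniq y hy.1 hy.2⟩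
  · intro x hx heq
    have hxx0 := huniq x hx heq
    refine ⟨by rw [hxx0, hx0def], ?_⟩
    rw [hxx0, hb''x0, hrr]
end

section
/- Fix a1, a2, E ∈ ℝ. Suppose E is not of the form F(0,x) = a(x)+b(x) or F(π,x) = a(x)-b(x) at any critical point of F on ℝ × (0,1). Then every root x ∈ (0,1) of the quartic P(x) = ((a2/2)x^2 + a1 x - E)^2 - (1-x)^3 x is simple. -/
theorem stmt_10 (a1 a2 E : ℝ) (P a b : ℝ → ℝ)
    (hP : ∀ x, P x = ((a2 / 2) * x ^ 2 + a1 * x - E) ^ 2 - (1 - x) ^ 3 * x)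
    (ha : ∀ x, a x = (a2 / 2) * x ^ 2 + a1 * x)
    (hb : ∀ x, b x = Real.sqrt ((1 - x) ^ 3 * x))
    (b' : ℝ → ℝ)
    (hb' : ∀ x, b' x = (1 - 4 * x) * Real.sqrt (1 - x) / (2 * Real.sqrt x))
    (hE : ∀ x ∈ Set.Ioo (0 : ℝ) 1,
      ((a2 * x + a1) + b' x = 0 → a x + b x ≠ E) ∧
      ((a2 * x + a1) - b' x = 0 → a x - b x ≠ E)) :
    ∀ x ∈ Set.Ioo (0 : ℝ) 1, P x = 0 → deriv P x ≠ 0 := by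
  intro x hx hPx hdP
  obtain ⟨hx0, hx1⟩ := hx
  set s := Real.sqrt x with hs
  set t := Real.sqrt (1 - x) with ht
  have hs0 : 0 < s := Real.sqrt_pos.mpr hx0
  have ht0 : 0 < t := Real.sqrt_pos.mpr (by linarith)
  have hs2 : s ^ 2 = x := Real.sq_sqrt hx0.le
  have ht2 : t ^ 2 = 1 - x := Real.sq_sqrt (by linarith)
  have hbx : b x = t ^ 3 * s := by
    rw [hb, show (1 - x) ^ 3 * x = (t ^ 3 * s) ^ 2 by
      rw [show (t ^ 3 * s) ^ 2 = (t ^ 2) ^ 3 * s ^ 2 by ring, ht2, hs2]]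
    exact Real.sqrt_sq (by positivity)
  have hb'x : b' x = (1 - 4 * x) * t / (2 * s) := by rw [hb']
  -- compute the derivative of P
  have h1 : HasDerivAt (fun y : ℝ => (a2 / 2) * y ^ 2 + a1 * y - E) (a2 * x + a1) x := by
    have h := (((hasDerivAt_pow 2 x).const_mul (a2 / 2)).add
      ((hasDerivAt_id x).const_mul a1)).sub_const E
    exact h.congr_deriv (by norm_num; ring)
  have hq1 : HasDerivAt (fun y : ℝ => 1 - y) (-1 : ℝ) x := by
    exact ((hasDerivAt_const x (1 : ℝ)).sub (hasDerivAt_id x)).congr_deriv (by norm_num)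
  have h2 : HasDerivAt (fun y : ℝ => (1 - y) ^ 3 * y)
      ((3 * (1 - x) ^ 2 * (-1)) * x + (1 - x) ^ 3 * 1) x := by
    have := ((hq1.pow 3).mul (hasDerivAt_id x))
    exact this.congr_deriv (by norm_num)
  have hD : HasDerivAt P
      (2 * ((a2 / 2) * x ^ 2 + a1 * x - E) ^ 1 * (a2 * x + a1)
        - ((3 * (1 - x) ^ 2 * (-1)) * x + (1 - x) ^ 3 * 1)) x := by
    have hPfun : P = fun y => ((a2 / 2) * y ^ 2 + a1 * y - E) ^ 2 - (1 - y) ^ 3 * y :=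
      funext hP
    rw [hPfun]
    have := (h1.pow 2).sub h2
    exact this.congr_deriv (by norm_num)
  have heq : 2 * ((a2 / 2) * x ^ 2 + a1 * x - E) * (a2 * x + a1)
      - ((3 * (1 - x) ^ 2 * (-1)) * x + (1 - x) ^ 3 * 1) = 0 := by
    have := hD.deriv
    rw [hdP] at this
    linarith [this.symm]
  rw [hP] at hPx
  have hfac : (((a2 / 2) * x ^ 2 + a1 * x - E) - t ^ 3 * s)
      * (((a2 / 2) * x ^ 2 + a1 * x - E) + t ^ 3 * s) = 0 := by
    have hsq : (1 - x) ^ 3 * x = (t ^ 3 * s) ^ 2 := by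
      rw [show (t ^ 3 * s) ^ 2 = (t ^ 2) ^ 3 * s ^ 2 by ring, ht2, hs2]
    linear_combination hPx + hsq
  rcases mul_eq_zero.mp hfac with hc | hc
  · -- a x - E = b x, i.e. a x - b x = E
    have hqeq : (a2 / 2) * x ^ 2 + a1 * x - E = t ^ 3 * s := by linarith
    have h4 : t ^ 3 * (2 * s * (a2 * x + a1) - (1 - 4 * x) * t) = 0 := by
      linear_combination heq - 2 * (a2 * x + a1) * hqeq
        - (1 - 4 * x) * (t ^ 2 + (1 - x)) * ht2
    have h5 : 2 * s * (a2 * x + a1) - (1 - 4 * x) * t = 0 :=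
      (mul_eq_zero.mp h4).resolve_left (pow_ne_zero 3 ht0.ne')
    refine (hE x ⟨hx0, hx1⟩).2 ?_ ?_
    · rw [hb'x]
      field_simp
      linarith
    · rw [ha, hbx]; linarith
  · -- a x - E = - b x, i.e. a x + b x = E
    have hqeq : (a2 / 2) * x ^ 2 + a1 * x - E = -(t ^ 3 * s) := by linarith
    have h4 : t ^ 3 * (2 * s * (a2 * x + a1) + (1 - 4 * x) * t) = 0 := by
      linear_combination -heq + 2 * (a2 * x + a1) * hqeq
        + (1 - 4 * x) * (t ^ 2 + (1 - x)) * ht2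
    have h5 : 2 * s * (a2 * x + a1) + (1 - 4 * x) * t = 0 :=
      (mul_eq_zero.mp h4).resolve_left (pow_ne_zero 3 ht0.ne')
    refine (hE x ⟨hx0, hx1⟩).1 ?_ ?_
    · rw [hb'x]
      field_simp
      linarith
    · rw [ha, hbx]; linarith
end

section
/- Fix a1, a2, E ∈ ℝ with E ≠ (a2/2) + a1. Let t0 ∈ ℝ be a root of the polynomial P(t) = ((a2/2) + a1 - E)*t^4 + (a1 - 2E)*t^2 - t - E, and set x0 = t0^2 / (1 + t0^2). If t0 < 0 then a(x0) + b(x0) = E, and if t0 > 0 then a(x0) - b(x0) = E, where a(x) = (a2/2)x^2 + a1 x and b(x) = sqrt((1-x)^3 x). -/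
theorem stmt_11 (a1 a2 E : ℝ) (hE : E ≠ a2 / 2 + a1)
    (a b : ℝ → ℝ)
    (ha : ∀ x, a x = (a2 / 2) * x ^ 2 + a1 * x)
    (hb : ∀ x, b x = Real.sqrt ((1 - x) ^ 3 * x))
    (t0 : ℝ)
    (hroot : (a2 / 2 + a1 - E) * t0 ^ 4 + (a1 - 2 * E) * t0 ^ 2 - t0 - E = 0)
    (x0 : ℝ) (hx0 : x0 = t0 ^ 2 / (1 + t0 ^ 2)) :
    (t0 < 0 → a x0 + b x0 = E) ∧ (t0 > 0 → a x0 - b x0 = E) := by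
  have hs : (0:ℝ) < 1 + t0 ^ 2 := by positivity
  have hb0 : b x0 = |t0| / (1 + t0 ^ 2) ^ 2 := by
    rw [hb, hx0]
    have h1 : (1 - t0 ^ 2 / (1 + t0 ^ 2)) ^ 3 * (t0 ^ 2 / (1 + t0 ^ 2))
        = (|t0| / (1 + t0 ^ 2) ^ 2) ^ 2 := by
      rw [div_pow, sq_abs]; field_simp; ring
    rw [h1, Real.sqrt_sq (by positivity)]
  have ha0 : a x0 = E + t0 / (1 + t0 ^ 2) ^ 2 := by
    rw [ha, hx0]
    field_simp
    linear_combination 2 * hroot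
  constructor
  · intro ht
    rw [ha0, hb0, abs_of_neg ht]
    field_simp
    ring
  · intro ht
    rw [ha0, hb0, abs_of_pos ht]
    ring
end

section
/- For 0 < k < 1 and a ∈ ℝ with |a| > 1/k, the integral ∫_1^{1/k} z / ((z^2 - a^2) * sqrt((z^2 - 1)*(1 - k^2 z^2))) dz equals -π / (2 * sqrt((a^2 - 1)*(a^2 k^2 - 1))). -/
set_option maxHeartbeats 1000000
open Real Set

theorem stmt_17_aux (k a z : ℝ) (hk0 : 0 < k) (hz1 : 1 < z) (hzk : z < 1/k) (ha2 : 1/k^2 < a^2) :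
    HasDerivAt (fun y : ℝ =>
      Real.arcsin ((((a^2-1) + (a^2-1/k^2)) * (y ^ 2 - a ^ 2) + 2 * (a^2-1) * (a^2-1/k^2))
          / ((1/k^2 - 1) * (y ^ 2 - a ^ 2)))
        / (2 * k * Real.sqrt ((a^2-1)*(a^2-1/k^2))))
      (z / ((z ^ 2 - a ^ 2) * Real.sqrt ((z ^ 2 - 1) * (1 - k ^ 2 * z ^ 2)))) z := by
  have hkne : k ≠ 0 := ne_of_gt hk0
  have hz0 : 0 < z := lt_trans one_pos hz1
  have h1 : 0 < z^2 - 1 := by nlinarith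
  have hkz : 0 < 1/k^2 - z^2 := by
    have h : z^2 < (1/k)^2 := by nlinarith
    have e : (1/k)^2 = 1/k^2 := by ring
    nlinarith
  have hK : 0 < 1/k^2 - 1 := by nlinarith
  have hA : 0 < a^2 - 1 := by nlinarith
  have hB : 0 < a^2 - 1/k^2 := by nlinarith
  have haz : 0 < a^2 - z^2 := by nlinarith
  have hw : z^2 - a^2 < 0 := by nlinarith
  have hwne : z^2 - a^2 ≠ 0 := ne_of_lt hw
  have hc : 0 < Real.sqrt ((a^2-1)*(a^2-1/k^2)) := Real.sqrt_pos.2 (mul_pos hA hB)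
  have hc2 : Real.sqrt ((a^2-1)*(a^2-1/k^2)) ^ 2 = (a^2-1)*(a^2-1/k^2) :=
    Real.sq_sqrt (mul_pos hA hB).le
  have hs : 0 < Real.sqrt ((z^2-1)*(1/k^2-z^2)) := Real.sqrt_pos.2 (mul_pos h1 hkz)
  have hs2 : Real.sqrt ((z^2-1)*(1/k^2-z^2)) ^ 2 = (z^2-1)*(1/k^2-z^2) :=
    Real.sq_sqrt (mul_pos h1 hkz).le
  set c := Real.sqrt ((a^2-1)*(a^2-1/k^2)) with hc_def
  set s := Real.sqrt ((z^2-1)*(1/k^2-z^2)) with hs_def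
  -- bounds on the arcsin argument
  have e1 : 1 - (((a^2-1) + (a^2-1/k^2)) * (z ^ 2 - a ^ 2) + 2 * (a^2-1) * (a^2-1/k^2))
          / ((1/k^2 - 1) * (z ^ 2 - a ^ 2))
        = 2*(a^2-1/k^2)*(z^2-1) / ((1/k^2-1)*(a^2-z^2)) := by
    have hKne := ne_of_gt hK
    have hazne := ne_of_gt haz
    rw [one_sub_div (mul_ne_zero hKne hwne),
      div_eq_div_iff (mul_ne_zero hKne hwne) (mul_ne_zero hKne hazne)]
    ring
  have e2 : 1 + (((a^2-1) + (a^2-1/k^2)) * (z ^ 2 - a ^ 2) + 2 * (a^2-1) * (a^2-1/k^2))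
          / ((1/k^2 - 1) * (z ^ 2 - a ^ 2))
        = 2*(a^2-1)*(1/k^2-z^2) / ((1/k^2-1)*(a^2-z^2)) := by
    have hKne := ne_of_gt hK
    have hazne := ne_of_gt haz
    rw [one_add_div (mul_ne_zero hKne hwne),
      div_eq_div_iff (mul_ne_zero hKne hwne) (mul_ne_zero hKne hazne)]
    ring
  set G := (((a^2-1) + (a^2-1/k^2)) * (z ^ 2 - a ^ 2) + 2 * (a^2-1) * (a^2-1/k^2))
          / ((1/k^2 - 1) * (z ^ 2 - a ^ 2)) with hG_def
  have hGlt : G < 1 := by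
    have hp : 0 < 2*(a^2-1/k^2)*(z^2-1) / ((1/k^2-1)*(a^2-z^2)) :=
      div_pos (by nlinarith [mul_pos hB h1]) (mul_pos hK haz)
    linarith [e1, hp]
  have hGgt : -1 < G := by
    have hp : 0 < 2*(a^2-1)*(1/k^2-z^2) / ((1/k^2-1)*(a^2-z^2)) :=
      div_pos (by nlinarith [mul_pos hA hkz]) (mul_pos hK haz)
    linarith [e2, hp]
  have hsqd : HasDerivAt (fun y:ℝ => y^2) (2*z) z := by simpa using hasDerivAt_pow 2 z
  have hNd : HasDerivAt (fun y:ℝ => ((a^2-1)+(a^2-1/k^2)) * (y^2 - a^2) + 2*(a^2-1)*(a^2-1/k^2))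
      (((a^2-1)+(a^2-1/k^2)) * (2*z)) z :=
    ((hsqd.sub_const _).const_mul _).add_const _
  have hDd : HasDerivAt (fun y:ℝ => (1/k^2-1) * (y^2 - a^2)) ((1/k^2-1)*(2*z)) z :=
    (hsqd.sub_const _).const_mul _
  have hGd := hNd.div hDd (mul_ne_zero (ne_of_gt hK) hwne)
  have harc := Real.hasDerivAt_arcsin (ne_of_gt hGgt) (ne_of_lt hGlt)
  have hFd := (harc.comp z hGd).div_const (2 * k * c)
  refine hFd.congr_deriv ?_
  have hKne := ne_of_gt hK
  have hazne := ne_of_gt haz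
  have hsplit : Real.sqrt ((z^2-1)*(1-k^2*z^2)) = k * s := by
    rw [hs_def]
    rw [show (z^2-1)*(1-k^2*z^2) = k^2*((z^2-1)*(1/k^2-z^2)) by field_simp,
      Real.sqrt_mul (sq_nonneg k), Real.sqrt_sq hk0.le]
  have hsq1 : Real.sqrt (1 - G^2)
      = 2*c*s/((1/k^2-1)*(a^2-z^2)) := by
    have key : 1 - G^2
        = (2*c*s/((1/k^2-1)*(a^2-z^2)))^2 := by
      calc 1 - G^2 = (1-G)*(1+G) := by ring
      _ = (2*(a^2-1/k^2)*(z^2-1) / ((1/k^2-1)*(a^2-z^2)))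
          * (2*(a^2-1)*(1/k^2-z^2) / ((1/k^2-1)*(a^2-z^2))) := by rw [e1, e2]
      _ = _ := by
          rw [div_mul_div_comm, div_pow, mul_pow, mul_pow, hc2, hs2,
            div_eq_div_iff (by positivity) (by positivity)]
          ring
    rw [key, Real.sqrt_sq (by positivity)]
  rw [hsplit, hsq1]
  have hcne := ne_of_gt hc
  have hsne := ne_of_gt hs
  field_simp
  have hk1 : k < 1 := by
    have h := lt_trans hz1 hzk
    rw [lt_div_iff₀ hk0, one_mul] at h
    exact h
  have hkk : (1:ℝ) - k^2 ≠ 0 := ne_of_gt (by nlinarith)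
  have hb2 : 0 < ((1-k^2)*(z^2-a^2))^2 :=
    pow_two_pos_of_ne_zero (mul_ne_zero hkk hwne)
  rw [div_eq_iff hkk]
  have hc2' : k^2*c^2 = (a^2-1)*(a^2*k^2-1) := by rw [hc2]; field_simp
  linear_combination (-2*(1-k^2)*(z^2-a^2)) * hc2'


theorem stmt_17 (k a : ℝ) (hk0 : 0 < k) (hk1 : k < 1) (ha : 1 / k < |a|) :
    ∫ z in (1 : ℝ)..(1 / k),
        z / ((z ^ 2 - a ^ 2) * Real.sqrt ((z ^ 2 - 1) * (1 - k ^ 2 * z ^ 2)))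
      = -Real.pi / (2 * Real.sqrt ((a ^ 2 - 1) * (a ^ 2 * k ^ 2 - 1))) := by
  have hkne : k ≠ 0 := ne_of_gt hk0
  have hk0' : (0:ℝ) < 1 / k := by positivity
  have hle : (1:ℝ) < 1 / k := (one_lt_div hk0).2 hk1
  have hk2 : (1:ℝ) < 1 / k ^ 2 := by
    rw [lt_div_iff₀ (by positivity)]; nlinarith
  have ha2 : 1 / k ^ 2 < a ^ 2 := by
    have h0 : (0:ℝ) ≤ 1/k := hk0'.le
    have h := mul_lt_mul'' ha ha h0 h0
    rw [← sq_abs a]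
    calc 1/k^2 = (1/k)*(1/k) := by ring
    _ < |a| * |a| := h
    _ = |a|^2 := by ring
  have hK : 0 < 1/k^2 - 1 := by nlinarith
  have hA : 0 < a^2 - 1 := by nlinarith
  have hB : 0 < a^2 - 1/k^2 := by nlinarith
  set F : ℝ → ℝ := fun y : ℝ =>
      Real.arcsin ((((a^2-1) + (a^2-1/k^2)) * (y ^ 2 - a ^ 2) + 2 * (a^2-1) * (a^2-1/k^2))
          / ((1/k^2 - 1) * (y ^ 2 - a ^ 2)))
        / (2 * k * Real.sqrt ((a^2-1)*(a^2-1/k^2))) with hF_def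
  have hza : ∀ z ∈ Icc (1:ℝ) (1/k), z ^ 2 - a ^ 2 < 0 := by
    intro z hz
    have h1 : z ^ 2 ≤ (1/k) ^ 2 := by
      have := hz.1; have := hz.2; nlinarith
    have h2 : (1/k)^2 = 1/k^2 := by ring
    nlinarith
  have hcont : ContinuousOn F (Icc (1:ℝ) (1/k)) := by
    apply ContinuousOn.div_const
    apply Real.continuous_arcsin.comp_continuousOn
    apply ContinuousOn.div
    · fun_prop
    · fun_prop
    · intro z hz
      have h1 := hza z hz
      have h2 : z ^ 2 - a ^ 2 ≠ 0 := ne_of_lt h1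
      exact mul_ne_zero (ne_of_gt hK) h2
  have hderiv : ∀ z ∈ Ioo (1:ℝ) (1/k),
      HasDerivAt F (z / ((z ^ 2 - a ^ 2) * Real.sqrt ((z ^ 2 - 1) * (1 - k ^ 2 * z ^ 2)))) z := by
    intro z hz
    rw [hF_def]
    exact stmt_17_aux k a z hk0 hz.1 hz.2 ha2
  have hfneg : ∀ z ∈ Ioo (1:ℝ) (1/k),
      0 ≤ -(z / ((z ^ 2 - a ^ 2) * Real.sqrt ((z ^ 2 - 1) * (1 - k ^ 2 * z ^ 2)))) := by
    intro z hz
    have hz0 : 0 < z := lt_trans one_pos hz.1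
    have hw : z ^ 2 - a ^ 2 < 0 := hza z (Ioo_subset_Icc_self hz)
    have hs : 0 ≤ Real.sqrt ((z ^ 2 - 1) * (1 - k ^ 2 * z ^ 2)) := Real.sqrt_nonneg _
    rw [neg_nonneg]
    apply div_nonpos_of_nonneg_of_nonpos hz0.le
    exact mul_nonpos_of_nonpos_of_nonneg hw.le hs
  have hint : IntervalIntegrable
      (fun z => z / ((z ^ 2 - a ^ 2) * Real.sqrt ((z ^ 2 - 1) * (1 - k ^ 2 * z ^ 2))))
      MeasureTheory.volume 1 (1/k) := by
    have h1 : IntervalIntegrable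
        (fun z => -(z / ((z ^ 2 - a ^ 2) * Real.sqrt ((z ^ 2 - 1) * (1 - k ^ 2 * z ^ 2)))))
        MeasureTheory.volume 1 (1/k) := by
      apply intervalIntegral.intervalIntegrable_deriv_of_nonneg (g := fun z => -F z)
      · rw [uIcc_of_le hle.le]; exact hcont.neg
      · rw [min_eq_left hle.le, max_eq_right hle.le]
        intro x hx; exact (hderiv x hx).neg
      · rw [min_eq_left hle.le, max_eq_right hle.le]
        exact hfneg
    have h2 := h1.neg
    convert h2 using 1
    funext z; simp
  have key := intervalIntegral.integral_eq_sub_of_hasDeriv_right_of_le hle.le hcont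
    (fun x hx => (hderiv x hx).hasDerivWithinAt) hint
  rw [key]
  have hG1 : (((a^2-1) + (a^2-1/k^2)) * ((1:ℝ) ^ 2 - a ^ 2) + 2 * (a^2-1) * (a^2-1/k^2))
          / ((1/k^2 - 1) * ((1:ℝ) ^ 2 - a ^ 2)) = 1 := by
    rw [div_eq_one_iff_eq (by
      apply mul_ne_zero (ne_of_gt hK)
      have : (1:ℝ) ^ 2 - a ^ 2 < 0 := by nlinarith
      exact ne_of_lt this)]
    ring
  have hG2 : (((a^2-1) + (a^2-1/k^2)) * ((1/k) ^ 2 - a ^ 2) + 2 * (a^2-1) * (a^2-1/k^2))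
          / ((1/k^2 - 1) * ((1/k) ^ 2 - a ^ 2)) = -1 := by
    rw [div_eq_iff (by
      apply mul_ne_zero (ne_of_gt hK)
      have h2 : (1/k)^2 = 1/k^2 := by ring
      have : (1/k) ^ 2 - a ^ 2 < 0 := by nlinarith
      exact ne_of_lt this)]
    field_simp
    ring
  have hkc : k * Real.sqrt ((a^2-1)*(a^2-1/k^2))
      = Real.sqrt ((a ^ 2 - 1) * (a ^ 2 * k ^ 2 - 1)) := by
    rw [← Real.sqrt_sq hk0.le, ← Real.sqrt_mul (sq_nonneg k)]
    congr 1
    field_simp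
    rw [Real.sq_sqrt (sq_nonneg k)]
  rw [hF_def]
  simp only [hG1, hG2, Real.arcsin_one, Real.arcsin_neg_one]
  rw [← hkc]
  rw [div_sub_div_same, mul_assoc]
  congr 1
  ring
end
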